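/- Consider a two-player threshold system where thresholds satisfy the symmetric valuation structure: the set of fixed-point threshold profiles {τ_θ} satisfying τ_θ = (Σ_{θ'} λ_θ(θ') ∫_{max(τ_θ, τ_{θ'})}^∞ u dF_{θθ'}) / (δ + Σ_{θ'} λ_θ(θ') ∫_{max(τ_θ, τ_{θ'})}^∞ dF_{θθ'}) for all θ, is a singleton; i.e., the equilibrium threshold profile is unique. -/

import Mathlib

open MeasureTheory Set

private lemma intOn_id (ν : Measure ℝ) [IsProbabilityMeasure ν]
    (h : Integrable (fun u => max u 0) ν) (t : ℝ) :
    IntegrableOn (fun u => u) (Ici t) ν := by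
  refine Integrable.mono' ((integrable_const |t|).add h.restrict)
    measurable_id.aestronglyMeasurable ?_
  rw [ae_restrict_iff' measurableSet_Ici]
  filter_upwards with u hu
  simp only [mem_Ici] at hu
  simp only [Pi.add_apply, Real.norm_eq_abs]
  rcases le_total 0 u with h0 | h0
  · rw [abs_of_nonneg h0, max_eq_left h0]
    have := abs_nonneg t
    linarith
  · rw [abs_of_nonpos h0]
    have h1 : -u ≤ |t| := by
      have := neg_le_abs t; linarith
    linarith [le_max_right u 0]

private lemma integral_tail_mono (ν : Measure ℝ) [IsProbabilityMeasure ν]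
    (h : Integrable (fun u => max u 0) ν) {s t c d : ℝ}
    (hst : s ≤ t) (hcd : c ≤ d) (hcs : c ≤ s) :
    ∫ u in Ici t, (u - d) ∂ν ≤ ∫ u in Ici s, (u - c) ∂ν := by
  have hIt : IntegrableOn (fun u => u - c) (Ici t) ν :=
    (intOn_id ν h t).sub (integrableOn_const (measure_lt_top ν _).ne)
  have hIs : IntegrableOn (fun u => u - c) (Ici s) ν :=
    (intOn_id ν h s).sub (integrableOn_const (measure_lt_top ν _).ne)
  have hItd : IntegrableOn (fun u => u - d) (Ici t) ν :=
    (intOn_id ν h t).sub (integrableOn_const (measure_lt_top ν _).ne)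
  have h1 : ∫ u in Ici t, (u - d) ∂ν ≤ ∫ u in Ici t, (u - c) ∂ν := by
    apply setIntegral_mono hItd hIt
    intro u; dsimp; linarith
  have hdisj : Disjoint (Ico s t) (Ici t) := by
    rw [Set.disjoint_left]
    intro x hx hx2
    exact absurd hx2 (not_le.2 hx.2)
  have h2 : ∫ u in Ici s, (u - c) ∂ν
      = (∫ u in Ico s t, (u - c) ∂ν) + ∫ u in Ici t, (u - c) ∂ν := by
    rw [← setIntegral_union hdisj measurableSet_Ici
      (hIs.mono_set Ico_subset_Ici_self) hIt, Ico_union_Ici_eq_Ici hst]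
  have h3 : 0 ≤ ∫ u in Ico s t, (u - c) ∂ν := by
    apply setIntegral_nonneg measurableSet_Ico
    intro u hu; linarith [hu.1]
  linarith

/-- With symmetric valuations (F_{θθ'} = F_{θ'θ}), fixed meeting rates
λ_θ(θ') ≥ 0 and δ > 0, the profile of thresholds satisfying the fixed-point equations
τ_θ = (Σ_{θ'} λ_θ(θ') ∫_{max(τ_θ,τ_{θ'})}^∞ u dF_{θθ'})
      / (δ + Σ_{θ'} λ_θ(θ') ∫_{max(τ_θ,τ_{θ'})}^∞ dF_{θθ'})
is unique. -/
theorem equilibrium_threshold_unique {T : Type*} [Fintype T]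
    (δ : ℝ) (hδ : 0 < δ)
    (lam : T → T → ℝ) (hlam : ∀ a b, 0 ≤ lam a b)
    (μ : T → T → Measure ℝ)
    [∀ a b, IsProbabilityMeasure (μ a b)] [∀ a b, NullSingletonClass (μ a b)]
    (hμint : ∀ a b, Integrable (fun u => max u 0) (μ a b))
    (hμsymm : ∀ a b, μ a b = μ b a)
    (τ τ' : T → ℝ)
    (hτ : ∀ θ, τ θ =
      (∑ θ', lam θ θ' * ∫ u in Ici (max (τ θ) (τ θ')), u ∂(μ θ θ')) /
      (δ + ∑ θ', lam θ θ' * ((μ θ θ') (Ici (max (τ θ) (τ θ')))).toReal))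
    (hτ' : ∀ θ, τ' θ =
      (∑ θ', lam θ θ' * ∫ u in Ici (max (τ' θ) (τ' θ')), u ∂(μ θ θ')) /
      (δ + ∑ θ', lam θ θ' * ((μ θ θ') (Ici (max (τ' θ) (τ' θ')))).toReal)) :
    τ = τ' := by
  -- Step 1: rewrite the fixed point equation in subtracted form
  have eq1 : ∀ (σ : T → ℝ),
      (∀ θ, σ θ =
        (∑ θ', lam θ θ' * ∫ u in Ici (max (σ θ) (σ θ')), u ∂(μ θ θ')) /
        (δ + ∑ θ', lam θ θ' * ((μ θ θ') (Ici (max (σ θ) (σ θ')))).toReal)) →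
      ∀ θ, δ * σ θ = ∑ θ', lam θ θ' *
        ∫ u in Ici (max (σ θ) (σ θ')), (u - σ θ) ∂(μ θ θ') := by
    intro σ hσ θ
    set N := ∑ θ', lam θ θ' * ∫ u in Ici (max (σ θ) (σ θ')), u ∂(μ θ θ') with hN
    set D := ∑ θ', lam θ θ' * ((μ θ θ') (Ici (max (σ θ) (σ θ')))).toReal with hD
    have hDnn : 0 ≤ D := Finset.sum_nonneg fun θ' _ =>
      mul_nonneg (hlam θ θ') ENNReal.toReal_nonneg
    have hpos : (0:ℝ) < δ + D := by linarith
    have hσθ : σ θ * (δ + D) = N := by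
      rw [hσ θ]; exact div_mul_cancel₀ N hpos.ne'
    have hint : ∀ θ', ∫ u in Ici (max (σ θ) (σ θ')), (u - σ θ) ∂(μ θ θ')
        = (∫ u in Ici (max (σ θ) (σ θ')), u ∂(μ θ θ'))
          - σ θ * ((μ θ θ') (Ici (max (σ θ) (σ θ')))).toReal := by
      intro θ'
      rw [integral_sub (intOn_id _ (hμint θ θ') _)
        (integrableOn_const (measure_lt_top _ _).ne),
        setIntegral_const, smul_eq_mul, mul_comm, measureReal_def]
    have hsum : ∑ θ', lam θ θ' *
        ∫ u in Ici (max (σ θ) (σ θ')), (u - σ θ) ∂(μ θ θ') = N - σ θ * D := by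
      simp_rw [hint]
      rw [hN, hD, Finset.mul_sum, ← Finset.sum_sub_distrib]
      exact Finset.sum_congr rfl fun x _ => by ring
    rw [hsum]; nlinarith [hσθ]
  have ha := eq1 τ hτ
  have hb := eq1 τ' hτ'
  -- key comparison lemma
  have main : ∀ (a b : T → ℝ),
      (∀ θ, δ * a θ = ∑ θ', lam θ θ' *
        ∫ u in Ici (max (a θ) (a θ')), (u - a θ) ∂(μ θ θ')) →
      (∀ θ, δ * b θ = ∑ θ', lam θ θ' *
        ∫ u in Ici (max (b θ) (b θ')), (u - b θ) ∂(μ θ θ')) →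
      ∀ θ0, b θ0 < a θ0 →
      (∀ s, a s ≠ b s → max (a s) (b s) ≤ max (a θ0) (b θ0)) → False := by
    intro a b ha hb θ0 hlt hmax
    have hm0 : max (a θ0) (b θ0) = a θ0 := max_eq_left hlt.le
    have hmaxeq : ∀ θ', max (a θ0) (a θ') = max (a θ0) (b θ') := by
      intro θ'
      by_cases hd : a θ' = b θ'
      · rw [hd]
      · have h1 := hmax θ' hd
        rw [hm0] at h1
        rw [max_eq_left (le_trans (le_max_left _ _) h1),
          max_eq_left (le_trans (le_max_right _ _) h1)]
    have hle : δ * a θ0 ≤ δ * b θ0 := by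
      rw [ha θ0, hb θ0]
      apply Finset.sum_le_sum
      intro θ' _
      apply mul_le_mul_of_nonneg_left _ (hlam θ0 θ')
      rw [hmaxeq θ']
      apply integral_tail_mono _ (hμint θ0 θ')
      · exact max_le_max hlt.le le_rfl
      · exact hlt.le
      · exact le_max_left _ _
    nlinarith
  by_contra hne
  obtain ⟨θ1, hθ1⟩ := Function.ne_iff.1 hne
  obtain ⟨θ0, hθ0mem, hθ0max⟩ := Finset.exists_max_image
    (Finset.univ.filter fun θ => τ θ ≠ τ' θ) (fun θ => max (τ θ) (τ' θ))
    ⟨θ1, Finset.mem_filter.2 ⟨Finset.mem_univ _, hθ1⟩⟩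
  have hθ0ne : τ θ0 ≠ τ' θ0 := (Finset.mem_filter.1 hθ0mem).2
  rcases hθ0ne.lt_or_gt with h | h
  · exact main τ' τ hb ha θ0 h fun s hs => by
      rw [max_comm (τ' s) (τ s), max_comm (τ' θ0) (τ θ0)]
      exact hθ0max s (Finset.mem_filter.2 ⟨Finset.mem_univ _, fun he => hs he.symm⟩)
  · exact main τ τ' ha hb θ0 h fun s hs =>
      hθ0max s (Finset.mem_filter.2 ⟨Finset.mem_univ _, hs⟩)
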